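/- arXiv:2307.16593 — 8 statements merged into one kernel-verified Lean document; each statement's English description precedes it below -/
import Mathlib

section
/- Let G be a finite connected graph with diameter D, let B ≥ 2D + 2, and let f : V → ℤ be edge-Lipschitz with f(V) ⊆ [−B, B). Then there exists c ∈ [0, B) such that no node p satisfies f(p) = c. -/
private lemma walk_lip {V : Type*} {G : SimpleGraph V} {f : V → ℤ}
    (hf : ∀ u v : V, G.Adj u v → |f u - f v| ≤ 1) {u v : V} (w : G.Walk u v) :
    |f u - f v| ≤ (w.length : ℤ) := by
  induction w with
  | nil => simp
  | cons h p ih =>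
    rename_i a b c
    have h1 := hf a b h
    calc |f a - f c| = |(f a - f b) + (f b - f c)| := by ring_nf
      _ ≤ |f a - f b| + |f b - f c| := abs_add_le _ _
      _ ≤ 1 + p.length := by linarith
      _ = ((p.length + 1 : ℕ) : ℤ) := by push_cast; ring

theorem stmt3 {V : Type*} [Fintype V] (G : SimpleGraph V) (hG : G.Connected)
    (B : ℤ) (hB : B ≥ 2 * G.diam + 2)
    (f : V → ℤ) (hf : ∀ u v : V, G.Adj u v → |f u - f v| ≤ 1)
    (hrange : ∀ p : V, f p ∈ Set.Ico (-B) B) :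
    ∃ c : ℤ, c ∈ Set.Ico 0 B ∧ ∀ p : V, f p ≠ c := by
  have hD0 : (0 : ℤ) ≤ G.diam := Int.natCast_nonneg _
  have hB2 : (2 : ℤ) ≤ B := by linarith
  cases isEmpty_or_nonempty V with
  | inl h =>
    exact ⟨0, ⟨le_refl 0, by linarith⟩, fun p => absurd trivial (IsEmpty.false p).elim⟩
  | inr h =>
    have hne : G.ediam ≠ ⊤ := by
      obtain ⟨u, v, huv⟩ := SimpleGraph.exists_edist_eq_ediam_of_finite (G := G)
      rw [← huv]
      exact SimpleGraph.edist_ne_top_iff_reachable.mpr (hG u v)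
    -- Lipschitz bound over diameter
    have key : ∀ u v : V, |f u - f v| ≤ (G.diam : ℤ) := by
      intro u v
      obtain ⟨w, hw⟩ := (hG u v).exists_walk_length_eq_dist
      calc |f u - f v| ≤ (w.length : ℤ) := walk_lip hf w
        _ = (G.dist u v : ℤ) := by rw [hw]
        _ ≤ (G.diam : ℤ) := by exact_mod_cast G.dist_le_diam hne
    obtain ⟨u0⟩ := h
    set m := f u0 with hm
    have hub : ∀ p : V, f p ≤ m + G.diam := fun p => by
      have := key p u0; rw [abs_le] at this; linarith [this.1, this.2]
    have hlb : ∀ p : V, m - G.diam ≤ f p := fun p => by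
      have := key p u0; rw [abs_le] at this; linarith [this.1, this.2]
    by_cases h1 : 0 ≤ m + G.diam + 1 ∧ m + G.diam + 1 < B
    · refine ⟨m + G.diam + 1, ⟨h1.1, h1.2⟩, fun p hp => ?_⟩
      have := hub p; omega
    · refine ⟨0, ⟨le_refl 0, by linarith⟩, fun p hp => ?_⟩
      push_neg at h1
      rcases lt_or_ge (m + (G.diam : ℤ) + 1) 0 with h2 | h2
      · have := hub p; omega
      · have h3 := h1 h2
        have := hlb p
        have := (hrange u0).2
        omega
end

section
/- Consider a unison execution (cⁱ)_{i≥0} on a graph G. If |c⁰(p) − c⁰(q)| ≤ 1 for every edge {p,q}, then |cⁱ(p) − cⁱ(q)| ≤ 1 for every edge {p,q} and every i ≥ 0. -/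
theorem stmt7 {V : Type*} [Fintype V] (G : SimpleGraph V)
    (c : ℕ → V → ℤ)
    (hstep : ∀ i (p : V), c (i + 1) p = c i p ∨ c (i + 1) p = c i p + 1)
    (hguard : ∀ i (p : V), c (i + 1) p = c i p + 1 →
      ∀ q : V, G.Adj p q → c i q = c i p ∨ c i q = c i p + 1)
    (h0 : ∀ p q : V, G.Adj p q → |c 0 p - c 0 q| ≤ 1) :
    ∀ i (p q : V), G.Adj p q → |c i p - c i q| ≤ 1 := by
  intro i
  induction i with
  | zero => exact h0
  | succ n ih =>
    intro p q hadj
    have hih := ih p q hadj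
    rcases hstep n p with hp | hp <;> rcases hstep n q with hq | hq
    · rw [abs_le] at *; omega
    · have := hguard n q hq p hadj.symm
      rw [abs_le] at *; omega
    · have := hguard n p hp q hadj
      rw [abs_le] at *; omega
    · rw [abs_le] at *; omega
end

section
/- Consider a unison execution (cⁱ)_{i≥0} on a connected graph G. Let p be a node and i < j be indices such that cʲ(p) > cⁱ(p) + 2D, where D is the diameter of G. Then for every node q there exists h with i ≤ h < j such that cʰ(q) = cⁱ(p) + D and c^{h+1}(q) = cʰ(q) + 1. -/
theorem stmt8 {V : Type*} [Fintype V] (G : SimpleGraph V) (hG : G.Connected)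
    (c : ℕ → V → ℤ)
    (hstep : ∀ i (p : V), c (i + 1) p = c i p ∨ c (i + 1) p = c i p + 1)
    (hguard : ∀ i (p : V), c (i + 1) p = c i p + 1 →
      ∀ q : V, G.Adj p q → c i q = c i p ∨ c i q = c i p + 1)
    (p : V) (i j : ℕ) (hij : i < j)
    (hbig : c j p > c i p + 2 * G.diam) :
    ∀ q : V, ∃ h : ℕ, i ≤ h ∧ h < j ∧
      c h q = c i p + G.diam ∧ c (h + 1) q = c h q + 1 := by
  classical
  -- notation
  set D : ℕ := G.diam with hD
  -- goodness of an edge at a time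
  set Good : ℕ → V → V → Prop :=
    fun t u v => c t u ≤ c t v + 1 ∧ c t v ≤ c t u + 1 with hGood
  have good_step : ∀ t u v, G.Adj u v → Good t u v → Good (t + 1) u v := by
    intro t u v hadj hg
    rcases hstep t u with hu | hu <;> rcases hstep t v with hv | hv
    · constructor <;> omega
    · have := hguard t v hv u hadj.symm
      constructor <;> omega
    · have := hguard t u hu v hadj
      constructor <;> omega
    · constructor <;> omega
  have bad_frozen_step : ∀ t u v, G.Adj u v → ¬ Good t u v →
      c (t + 1) u = c t u ∧ c (t + 1) v = c t v := by
    intro t u v hadj hb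
    rcases hstep t u with hu | hu <;> rcases hstep t v with hv | hv
    · exact ⟨hu, hv⟩
    · exfalso; have := hguard t v hv u hadj.symm
      simp only [hGood, not_and_or, not_le] at hb; omega
    · exfalso; have := hguard t u hu v hadj
      simp only [hGood, not_and_or, not_le] at hb; omega
    · exfalso; have := hguard t u hu v hadj
      simp only [hGood, not_and_or, not_le] at hb; omega
  have bad_all : ∀ t₀ u v, G.Adj u v → ¬ Good t₀ u v → ∀ t, ¬ Good t u v := by
    intro t₀ u v hadj hb
    have fwd : ∀ t, t₀ ≤ t → ¬ Good t u v := by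
      intro t ht
      induction t, ht using Nat.le_induction with
      | base => exact hb
      | succ n hn ih =>
        have hf := bad_frozen_step n u v hadj ih
        simp only [hGood] at ih ⊢
        omega
    intro t
    by_cases ht : t₀ ≤ t
    · exact fwd t ht
    · intro hg
      have : Good t₀ u v := by
        have : ∀ s, t ≤ s → Good s u v := by
          intro s hs
          induction s, hs using Nat.le_induction with
          | base => exact hg
          | succ n hn ih => exact good_step n u v hadj ih
        exact this t₀ (by omega)
      exact hb this
  have frozen_of_bad : ∀ t₀ u v, G.Adj u v → ¬ Good t₀ u v →
      ∀ s t, s ≤ t → c t u = c s u := by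
    intro t₀ u v hadj hb s t hst
    induction t, hst using Nat.le_induction with
    | base => rfl
    | succ n hn ih =>
      have := bad_frozen_step n u v hadj (bad_all t₀ u v hadj hb n)
      omega
  -- by cases on existence of a bad edge
  by_cases hbad : ∃ u v t, G.Adj u v ∧ ¬ Good t u v
  · -- a bad edge freezes a node, bounding p's growth by 2 * diam : contradiction
    exfalso
    obtain ⟨u, v, t₀, hadj, hb⟩ := hbad
    have hfu : ∀ s t, s ≤ t → c t u = c s u := frozen_of_bad t₀ u v hadj hb
    -- growth bound along a walk to u
    have growth : ∀ (w a : V) (W : G.Walk w a), (∀ s t, s ≤ t → c t a = c s a) →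
        ∀ (t : ℕ), i ≤ t → c t w ≤ c i w + 2 * (W.length : ℤ) := by
      intro w a W
      induction W with
      | nil =>
        intro hfa t ht
        have := hfa i t ht
        simp [this]
      | @cons w x u' hadj' W' ih =>
        intro hfa t ht
        by_cases hgxw : ∀ s, Good s w x
        · have h1 := (hgxw t).1
          have h2 := (hgxw i).2
          have h3 := ih hfa t ht
          simp only [SimpleGraph.Walk.length_cons]
          push_cast
          omega
        · push_neg at hgxw
          obtain ⟨s, hs⟩ := hgxw
          have := frozen_of_bad s w x hadj' hs i t ht
          simp only [SimpleGraph.Walk.length_cons]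
          push_cast
          omega
    obtain ⟨W, hW⟩ := hG.exists_walk_length_eq_dist p u
    have hgrow := growth p u W hfu j (le_of_lt hij)
    -- dist ≤ diam
    haveI : Nonempty V := hG.nonempty
    have hne : G.ediam ≠ ⊤ := by
      obtain ⟨x, y, hxy⟩ := SimpleGraph.exists_edist_eq_ediam_of_finite (G := G)
      rw [← hxy]
      exact (SimpleGraph.edist_ne_top_iff_reachable).2 (hG x y)
    have hdd : G.dist p u ≤ D := SimpleGraph.dist_le_diam hne
    rw [hW] at hgrow
    have : (G.dist p u : ℤ) ≤ (D : ℤ) := by exact_mod_cast hdd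
    omega
  · -- no bad edge ever: clocks are within dist of each other at all times
    push_neg at hbad
    have spread : ∀ (u v : V) (W : G.Walk u v) (t : ℕ),
        c t u ≤ c t v + (W.length : ℤ) ∧ c t v ≤ c t u + (W.length : ℤ) := by
      intro u v W
      induction W with
      | nil => intro t; simp
      | @cons w x v' hadj' W' ih =>
        intro t
        have hg := hbad w x t hadj'
        have := ih t
        simp only [hGood] at hg
        simp only [SimpleGraph.Walk.length_cons]
        push_cast
        omega
    haveI : Nonempty V := hG.nonempty
    have hne : G.ediam ≠ ⊤ := by
      obtain ⟨x, y, hxy⟩ := SimpleGraph.exists_edist_eq_ediam_of_finite (G := G)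
      rw [← hxy]
      exact (SimpleGraph.edist_ne_top_iff_reachable).2 (hG x y)
    have mono : ∀ (q : V) (s t : ℕ), s ≤ t → c s q ≤ c t q := by
      intro q s t hst
      induction t, hst using Nat.le_induction with
      | base => exact le_refl _
      | succ n hn ih =>
        rcases hstep n q with h | h <;> omega
    intro q
    obtain ⟨W, hW⟩ := hG.exists_walk_length_eq_dist p q
    have hdd : G.dist p q ≤ D := SimpleGraph.dist_le_diam hne
    have hddz : (G.dist p q : ℤ) ≤ (D : ℤ) := by exact_mod_cast hdd
    have hiq : c i q ≤ c i p + (D : ℤ) := by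
      have := (spread p q W i).2
      rw [hW] at this; omega
    have hjq : c i p + (D : ℤ) + 1 ≤ c j q := by
      have := (spread p q W j).1
      rw [hW] at this; omega
    -- find the increment step
    set K : ℤ := c i p + (D : ℤ) with hK
    have hPj : K + 1 ≤ c j q ∧ i ≤ j := ⟨hjq, le_of_lt hij⟩
    set P : ℕ → Prop := fun t => K + 1 ≤ c t q ∧ i ≤ t with hP
    have hex : ∃ t, P t := ⟨j, hPj⟩
    set m := Nat.find hex with hm
    have hPm : P m := Nat.find_spec hex
    have hmj : m ≤ j := Nat.find_le hPj
    have hmi : i < m := by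
      rcases lt_or_eq_of_le hPm.2 with h | h
      · exact h
      · exfalso; rw [← h] at hPm; omega
    have hnot : ¬ P (m - 1) := Nat.find_min hex (by omega)
    have hm1i : i ≤ m - 1 := by omega
    simp only [hP, not_and_or, not_le] at hnot
    have hle : c (m - 1) q ≤ K := by
      rcases hnot with h | h
      · omega
      · omega
    have hmeq : m - 1 + 1 = m := by omega
    have hstep' := hstep (m - 1) q
    rw [hmeq] at hstep'
    have hcm : K + 1 ≤ c m q := hPm.1
    refine ⟨m - 1, hm1i, by omega, ?_, ?_⟩
    · rw [hmeq] at *; omega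
    · rw [hmeq]; omega
end

section
/- Consider a unison execution (cⁱ)_{i≥0} on a connected graph G with diameter D. Let p, q be nodes and i < j be indices such that cʲ(p) − cⁱ(p) > 2·d(q,p). Then there exist indices i ≤ i' < j' ≤ j such that c^{i'}(q) ≤ cⁱ(p) + d(q,p) and c^{j'}(q) ≥ cʲ(p) − d(q,p). -/
section Aux

variable {V : Type*} (c : ℕ → V → ℤ)

private lemma unison_mono (hstep : ∀ i (p : V), c (i + 1) p = c i p ∨ c (i + 1) p = c i p + 1)
    (v : V) : ∀ a b : ℕ, a ≤ b → c a v ≤ c b v := by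
  intro a b hab
  induction b with
  | zero => simp_all
  | succ b ih =>
    rcases Nat.lt_succ_iff_lt_or_eq.mp (Nat.lt_succ_of_le hab) with h | h
    · have := ih (by omega)
      rcases hstep b v with h' | h' <;> omega
    · subst h; rfl

private lemma unison_first (hstep : ∀ i (p : V), c (i + 1) p = c i p ∨ c (i + 1) p = c i p + 1)
    (v : V) : ∀ a b : ℕ, a ≤ b → c a v < c b v →
    ∃ t, a ≤ t ∧ t < b ∧ c t v = c a v ∧ c (t + 1) v = c t v + 1 := by
  intro a b
  induction b with
  | zero => intro hab hlt; interval_cases a; omega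
  | succ b ih =>
    intro hab hlt
    have hab' : a ≤ b := by
      rcases Nat.lt_succ_iff_lt_or_eq.mp (Nat.lt_succ_of_le hab) with h | h
      · omega
      · subst h; omega
    by_cases hc : c a v < c b v
    · obtain ⟨t, h1, h2, h3, h4⟩ := ih hab' hc
      exact ⟨t, h1, by omega, h3, h4⟩
    · have hm := unison_mono c hstep v a b hab'
      have heq : c a v = c b v := le_antisymm hm (by omega)
      rcases hstep b v with h' | h'
      · omega
      · exact ⟨b, hab', by omega, heq.symm, h'⟩

private lemma unison_last (hstep : ∀ i (p : V), c (i + 1) p = c i p ∨ c (i + 1) p = c i p + 1)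
    (v : V) : ∀ a b : ℕ, a ≤ b → c a v < c b v →
    ∃ s, a ≤ s ∧ s < b ∧ c (s + 1) v = c s v + 1 ∧ c (s + 1) v = c b v := by
  intro a b
  induction b with
  | zero => intro hab hlt; interval_cases a; omega
  | succ b ih =>
    intro hab hlt
    have hab' : a ≤ b := by
      rcases Nat.lt_succ_iff_lt_or_eq.mp (Nat.lt_succ_of_le hab) with h | h
      · omega
      · subst h; omega
    rcases hstep b v with h' | h'
    · have hc : c a v < c b v := by omega
      obtain ⟨s, h1, h2, h3, h4⟩ := ih hab' hc
      exact ⟨s, h1, by omega, h3, by omega⟩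
    · exact ⟨b, hab', by omega, h', rfl⟩

end Aux

theorem stmt9 {V : Type*} [Fintype V] (G : SimpleGraph V) (hG : G.Connected)
    (c : ℕ → V → ℤ)
    (hstep : ∀ i (p : V), c (i + 1) p = c i p ∨ c (i + 1) p = c i p + 1)
    (hguard : ∀ i (p : V), c (i + 1) p = c i p + 1 →
      ∀ q : V, G.Adj p q → c i q = c i p ∨ c i q = c i p + 1)
    (p q : V) (i j : ℕ) (hij : i < j)
    (hbig : c j p - c i p > 2 * (G.dist q p : ℤ)) :
    ∃ i' j' : ℕ, i ≤ i' ∧ i' < j' ∧ j' ≤ j ∧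
      c i' q ≤ c i p + G.dist q p ∧ c j' q ≥ c j p - G.dist q p := by
  suffices h : ∀ k : ℕ, ∀ q : V, G.dist q p = k → c j p - c i p > 2 * (k : ℤ) →
      ∃ i' j' : ℕ, i ≤ i' ∧ i' < j' ∧ j' ≤ j ∧
        c i' q ≤ c i p + (k : ℤ) ∧ c j' q ≥ c j p - (k : ℤ) by
    obtain ⟨i', j', h1, h2, h3, h4, h5⟩ := h (G.dist q p) q rfl hbig
    exact ⟨i', j', h1, h2, h3, h4, h5⟩
  intro k
  induction k with
  | zero =>
    intro q hd _
    have hq : q = p := by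
      rcases SimpleGraph.dist_eq_zero_iff_eq_or_not_reachable.mp hd with h | h
      · exact h
      · exact absurd (hG q p) h
    subst hq
    exact ⟨i, j, le_refl i, hij, le_refl j, by omega, by omega⟩
  | succ k ih =>
    intro q hd hbig'
    -- find a neighbor r of q with dist r p = k
    obtain ⟨w, hw⟩ := (hG q p).exists_walk_length_eq_dist
    rw [hd] at hw
    cases w with
    | nil => simp at hw
    | @cons _ r _ hadj w' =>
      simp only [SimpleGraph.Walk.length_cons, Nat.succ_inj] at hw
      have hle : G.dist r p ≤ k := hw ▸ SimpleGraph.dist_le w'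
      have hge : k + 1 ≤ G.dist r p + 1 := by
        calc k + 1 = G.dist q p := hd.symm
        _ ≤ G.dist q r + G.dist r p := hG.dist_triangle
        _ ≤ 1 + G.dist r p := by
            have h1 : G.dist q r ≤ 1 := by
              simpa using SimpleGraph.dist_le hadj.toWalk
            omega
        _ = G.dist r p + 1 := by omega
      have hdr : G.dist r p = k := by omega
      obtain ⟨i1, j1, hi1, hij1, hj1, hA, hB⟩ := ih r hdr (by push_cast at hbig'; omega)
      have hlt : c i1 r < c j1 r := by push_cast at hbig' ⊢; omega
      obtain ⟨t, ht1, ht2, ht3, ht4⟩ := unison_first c hstep r i1 j1 (le_of_lt hij1) hlt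
      obtain ⟨s, hs1, hs2, hs3, hs4⟩ := unison_last c hstep r i1 j1 (le_of_lt hij1) hlt
      have hts : t < s := by
        by_contra h
        have := unison_mono c hstep r s t (by omega)
        push_cast at hbig'
        omega
      have hq1 := hguard t r ht4 q hadj.symm
      have hq2 := hguard s r hs3 q hadj.symm
      refine ⟨t, s, by omega, hts, by omega, ?_, ?_⟩
      · push_cast; omega
      · push_cast; omega
end

section
/- Consider a unison execution (cⁱ)_{0 ≤ i ≤ h} on a connected graph G with diameter D. If some node r satisfies cⁱ(r) = c⁰(r) for every 0 ≤ i ≤ h (r never increments), then for every node p and all indices 0 ≤ i < j ≤ h, cʲ(p) − cⁱ(p) ≤ 2D. -/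
theorem stmt10 {V : Type*} [Fintype V] (G : SimpleGraph V) (hG : G.Connected)
    (h : ℕ) (c : ℕ → V → ℤ)
    (hstep : ∀ i < h, ∀ p : V, c (i + 1) p = c i p ∨ c (i + 1) p = c i p + 1)
    (hguard : ∀ i < h, ∀ p : V, c (i + 1) p = c i p + 1 →
      ∀ q : V, G.Adj p q → c i q = c i p ∨ c i q = c i p + 1)
    (r : V) (hr : ∀ i ≤ h, c i r = c 0 r) :
    ∀ (p : V) (i j : ℕ), i < j → j ≤ h → c j p - c i p ≤ 2 * G.diam := by
  -- monotonicity
  have mono : ∀ (x : V) (i j : ℕ), i ≤ j → j ≤ h → c i x ≤ c j x := by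
    intro x i j hij hjh
    induction j with
    | zero => simp_all
    | succ k ih =>
      rcases Nat.lt_or_ge i (k+1) with hlt | hge
      · have hk : c i x ≤ c k x := ih (Nat.lt_succ_iff.mp hlt) (Nat.le_of_succ_le hjh)
        rcases hstep k (Nat.lt_of_succ_le hjh) x with h1 | h1 <;> omega
      · have : i = k + 1 := le_antisymm hij hge
        rw [this]
  -- key claim for adjacent nodes
  have key : ∀ (p q : V), G.Adj p q → ∀ (i j : ℕ), i ≤ j → j ≤ h →
      c j p = c i p ∨ (c i q ≤ c i p + 1 ∧ c j p ≤ c j q + 1) := by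
    intro p q hpq i j hij hjh
    induction j with
    | zero =>
      have : i = 0 := Nat.le_zero.mp hij
      subst this; exact Or.inl rfl
    | succ k ih =>
      rcases Nat.lt_or_ge i (k+1) with hlt | hge
      · have hik : i ≤ k := Nat.lt_succ_iff.mp hlt
        have hkh : k < h := Nat.lt_of_succ_le hjh
        have IH := ih hik (Nat.le_of_succ_le hjh)
        have hqstep : c k q ≤ c (k+1) q := by
          rcases hstep k hkh q with h1 | h1 <;> omega
        rcases hstep k hkh p with h1 | h1
        · -- no increment
          rcases IH with IH | IH
          · exact Or.inl (by omega)
          · exact Or.inr ⟨IH.1, by omega⟩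
        · -- increment at step k
          have hg := hguard k hkh p h1 q hpq
          refine Or.inr ⟨?_, by omega⟩
          rcases IH with IH | IH
          · have : c i q ≤ c k q := mono q i k hik (Nat.le_of_lt hkh)
            omega
          · exact IH.1
      · have : i = k + 1 := le_antisymm hij hge
        subst this; exact Or.inl rfl
  -- consequence: difference bound for adjacent nodes
  have adj2 : ∀ (p q : V), G.Adj p q → ∀ (i j : ℕ), i ≤ j → j ≤ h →
      c j p - c i p ≤ c j q - c i q + 2 := by
    intro p q hpq i j hij hjh
    have hq := mono q i j hij hjh
    rcases key p q hpq i j hij hjh with h1 | h1 <;> omega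
  intro p i j hij hjh
  have hijle : i ≤ j := Nat.le_of_lt hij
  -- walk induction
  have walkbound : ∀ (x : V) (w : G.Walk x r), c j x - c i x ≤ 2 * (w.length : ℤ) := by
    intro x w
    induction w with
    | nil =>
      have h1 := hr i (le_trans hijle hjh)
      have h2 := hr j hjh
      simp [h1, h2]
    | @cons a b _ hab w ih =>
      have := adj2 a b hab i j hijle hjh
      have hih := ih hr
      have hlen : ((SimpleGraph.Walk.cons hab w).length : ℤ) = (w.length : ℤ) + 1 := by
        simp
      omega
  obtain ⟨w, hw⟩ := hG.exists_walk_length_eq_dist p r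
  have hdist : G.dist p r ≤ G.diam := by
    apply SimpleGraph.dist_le_diam
    have : Nonempty V := hG.nonempty
    obtain ⟨u, v, huv⟩ := G.exists_edist_eq_ediam_of_finite
    rw [← huv]
    exact SimpleGraph.edist_ne_top_iff_reachable.mpr (hG u v)
  have := walkbound p w
  rw [hw] at this
  have : (G.dist p r : ℤ) ≤ (G.diam : ℤ) := by exact_mod_cast hdist
  omega
end

section
/- Consider a unison execution (cⁱ)_{0 ≤ i ≤ h} on a connected graph G with n nodes and diameter D, and suppose some node r satisfies cⁱ(r) = c⁰(r) for all i ≤ h. Then the total number of increments in the execution (pairs (p,i) with c^{i+1}(p) = cⁱ(p) + 1) is at most 2Dn. -/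
theorem stmt11 {V : Type*} [Fintype V] [DecidableEq V] (G : SimpleGraph V) (hG : G.Connected)
    (h : ℕ) (c : ℕ → V → ℤ)
    (hstep : ∀ i < h, ∀ p : V, c (i + 1) p = c i p ∨ c (i + 1) p = c i p + 1)
    (hguard : ∀ i < h, ∀ p : V, c (i + 1) p = c i p + 1 →
      ∀ q : V, G.Adj p q → c i q = c i p ∨ c i q = c i p + 1)
    (r : V) (hr : ∀ i ≤ h, c i r = c 0 r) :
    ((Finset.univ ×ˢ Finset.range h).filter
        (fun pi : V × ℕ => c (pi.2 + 1) pi.1 = c pi.2 pi.1 + 1)).card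
      ≤ 2 * G.diam * Fintype.card V := by
  classical
  set inc : V → ℕ → ℕ → ℕ :=
    fun x i j => ((Finset.Ico i j).filter (fun t => c (t+1) x = c t x + 1)).card with hinc
  -- counting lemma: value = initial + number of increments
  have hA : ∀ x : V, ∀ i j : ℕ, i ≤ j → j ≤ h → c j x = c i x + inc x i j := by
    intro x i j hij hjh
    induction j, hij using Nat.le_induction with
    | base => simp [hinc]
    | succ j hij ih =>
      have hjh' : j ≤ h := by omega
      have hI : Finset.Ico i (j+1) = insert j (Finset.Ico i j) :=
        Nat.Ico_succ_right_eq_insert_Ico hij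
      have hnot : j ∉ Finset.Ico i j := by simp
      rcases hstep j (by omega) x with h1 | h1
      · have : inc x i (j+1) = inc x i j := by
          simp only [hinc, hI, Finset.filter_insert]
          split
          · next hcond => omega
          · rfl
        rw [h1, this, ih hjh']
      · have : inc x i (j+1) = inc x i j + 1 := by
          simp only [hinc, hI, Finset.filter_insert]
          split
          · next hcond =>
            rw [Finset.card_insert_of_notMem (fun hm => hnot (Finset.mem_filter.mp hm).1)]
          · next hcond => exact absurd h1 hcond
        rw [h1, this, ih hjh']
        push_cast
        ring
  have hmono : ∀ x : V, ∀ i j : ℕ, i ≤ j → j ≤ h → c i x ≤ c j x := by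
    intro x i j hij hjh
    rw [hA x i j hij hjh]
    omega
  set K : V → ℕ := fun x => inc x 0 h with hK
  -- the root never increments
  have hKr : K r = 0 := by
    simp only [hK, hinc, Finset.card_eq_zero]
    rw [Finset.filter_eq_empty_iff]
    intro t ht
    rw [Finset.mem_Ico] at ht
    have h1 := hr t (by omega)
    have h2 := hr (t+1) (by omega)
    intro hc
    rw [h1, h2] at hc
    omega
  -- key step: along an edge, increments differ by at most 2
  have hkey : ∀ p q : V, G.Adj p q → K p ≤ K q + 2 := by
    intro p q hadj
    set S : Finset ℕ := (Finset.Ico 0 h).filter (fun t => c (t+1) p = c t p + 1) with hS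
    have hKS : K p = S.card := rfl
    rcases S.eq_empty_or_nonempty with he | hne
    · rw [hKS, he]; simp
    · set i1 := S.min' hne with hi1def
      set ik := S.max' hne with hikdef
      have hi1 : i1 ∈ S := S.min'_mem hne
      have hik : ik ∈ S := S.max'_mem hne
      have hi1ik : i1 ≤ ik := S.min'_le ik hik
      have hikh : ik < h := by
        have := (Finset.mem_filter.mp hik).1
        rw [Finset.mem_Ico] at this; omega
      have hi1h : i1 < h := by omega
      have hPi1 : c (i1+1) p = c i1 p + 1 := (Finset.mem_filter.mp hi1).2
      have hPik : c (ik+1) p = c ik p + 1 := (Finset.mem_filter.mp hik).2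
      -- no increments of p before i1
      have hc1 : c i1 p = c 0 p := by
        have : inc p 0 i1 = 0 := by
          simp only [hinc, Finset.card_eq_zero, Finset.filter_eq_empty_iff]
          intro t ht hc
          rw [Finset.mem_Ico] at ht
          have : t ∈ S := Finset.mem_filter.mpr ⟨Finset.mem_Ico.mpr ⟨Nat.zero_le _, by omega⟩, hc⟩
          have := S.min'_le t this
          omega
        rw [hA p 0 i1 (Nat.zero_le _) (by omega), this]; simp
      -- exactly K p - 1 increments of p before ik
      have hc2 : c ik p = c 0 p + (S.card - 1 : ℤ) := by
        have hfe : (Finset.Ico 0 ik).filter (fun t => c (t+1) p = c t p + 1) = S.erase ik := by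
          ext t
          constructor
          · intro ht
            obtain ⟨hm, hc⟩ := Finset.mem_filter.mp ht
            rw [Finset.mem_Ico] at hm
            refine Finset.mem_erase.mpr ⟨by omega, Finset.mem_filter.mpr
              ⟨Finset.mem_Ico.mpr ⟨Nat.zero_le _, by omega⟩, hc⟩⟩
          · intro ht
            obtain ⟨hne', hm⟩ := Finset.mem_erase.mp ht
            obtain ⟨hm2, hc⟩ := Finset.mem_filter.mp hm
            have h1 : t ≤ ik := S.le_max' t hm
            exact Finset.mem_filter.mpr ⟨Finset.mem_Ico.mpr ⟨Nat.zero_le _, by omega⟩, hc⟩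
        have hcard : inc p 0 ik = S.card - 1 := by
          simp only [hinc, hfe]
          rw [Finset.card_erase_of_mem hik]
        have hpos : 1 ≤ S.card := Finset.card_pos.mpr hne
        rw [hA p 0 ik (Nat.zero_le _) (by omega), hcard]
        push_cast [Nat.cast_sub hpos]
        omega
      -- guards
      have hg1 := hguard i1 hi1h p hPi1 q hadj
      have hg2 := hguard ik hikh p hPik q hadj
      -- q's value grows by at most K q between i1 and ik
      have hqgrow : c ik q ≤ c i1 q + (K q : ℤ) := by
        rw [hA q i1 ik hi1ik (by omega)]
        have : inc q i1 ik ≤ K q := by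
          apply Finset.card_le_card
          apply Finset.filter_subset_filter
          intro t ht
          rw [Finset.mem_Ico] at ht ⊢
          omega
        omega
      have hpos : 1 ≤ S.card := Finset.card_pos.mpr hne
      rw [hKS]
      have e1 : c i1 q ≤ c 0 p + 1 := by rcases hg1 with h1 | h1 <;> rw [h1, hc1] <;> omega
      have e2 : c 0 p + (S.card - 1 : ℤ) ≤ c ik q := by
        rcases hg2 with h1 | h1 <;> rw [h1, hc2] <;> omega
      have : (S.card : ℤ) - 1 ≤ 1 + K q := by omega
      exact_mod_cast by omega
  -- induction on distance to the root
  have hKd : ∀ d : ℕ, ∀ p : V, G.dist p r ≤ d → K p ≤ 2 * d := by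
    intro d
    induction d with
    | zero =>
      intro p hp
      have hp0 : G.dist p r = 0 := Nat.le_zero.mp hp
      have : p = r := (hG.dist_eq_zero_iff).mp hp0
      rw [this, hKr]
    | succ d ih =>
      intro p hp
      by_cases h' : G.dist p r ≤ d
      · exact (ih p h').trans (by omega)
      · have hd : G.dist p r = d + 1 := by omega
        obtain ⟨w, hw⟩ := hG.exists_walk_length_eq_dist p r
        cases w with
        | nil =>
          rw [SimpleGraph.dist_self] at hd
          omega
        | cons hadj rest =>
          rename_i q
          have hlen : rest.length = d := by
            rw [SimpleGraph.Walk.length_cons, hd] at hw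
            omega
          have hqd : G.dist q r ≤ d := by
            have := SimpleGraph.dist_le rest
            omega
          have := hkey p q hadj
          have := ih q hqd
          omega
  -- distance is at most the diameter
  have hne : G.ediam ≠ ⊤ := by
    haveI := hG.nonempty
    obtain ⟨u, v, huv⟩ := SimpleGraph.exists_edist_eq_ediam_of_finite (G := G)
    rw [← huv]
    exact SimpleGraph.edist_ne_top_iff_reachable.mpr (hG u v)
  have hKdiam : ∀ p : V, K p ≤ 2 * G.diam := by
    intro p
    have h1 : G.dist p r ≤ G.diam := SimpleGraph.dist_le_diam hne
    have := hKd (G.dist p r) p le_rfl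
    omega
  -- sum up
  have hcard : ((Finset.univ ×ˢ Finset.range h).filter
        (fun pi : V × ℕ => c (pi.2 + 1) pi.1 = c pi.2 pi.1 + 1)).card
      = ∑ p : V, K p := by
    simp only [hK, hinc, Nat.Ico_zero_eq_range, Finset.card_filter, Finset.sum_product]
  rw [hcard]
  calc ∑ p : V, K p ≤ ∑ _p : V, 2 * G.diam := Finset.sum_le_sum (fun p _ => hKdiam p)
    _ = 2 * G.diam * Fintype.card V := by
        rw [Finset.sum_const, smul_eq_mul, Finset.card_univ, mul_comm]
end

section
/- Let G be a finite connected graph with diameter D, s ∈ V a distinguished node, and τ : ℕ × V → ℤ a family of 'time' functions satisfying: (1) τ(0, p) ≥ −d(p, s) for all p, and τ(0, s) = 0; (2) τ(j+1, p) ≥ τ(j, p) for all j, p (monotonicity); (3) |τ(j, p) − τ(j, q)| ≤ 1 for every edge {p,q} and every j; (4) for every j and p, if some neighbor q of p satisfies τ(j, q) > τ(j, p), then τ(j+1, p) ≥ τ(j, p) + 1. Then τ(2D, p) ≥ 0 for every node p. -/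
theorem stmt13 {V : Type*} [Fintype V] (G : SimpleGraph V) (hG : G.Connected)
    (s : V) (τ : ℕ → V → ℤ)
    (h1 : ∀ p : V, τ 0 p ≥ -(G.dist p s : ℤ)) (h1s : τ 0 s = 0)
    (h2 : ∀ (j : ℕ) (p : V), τ (j + 1) p ≥ τ j p)
    (h3 : ∀ (j : ℕ) (p q : V), G.Adj p q → |τ j p - τ j q| ≤ 1)
    (h4 : ∀ (j : ℕ) (p : V), (∃ q : V, G.Adj p q ∧ τ j q > τ j p) →
      τ (j + 1) p ≥ τ j p + 1) :
    ∀ p : V, τ (2 * G.diam) p ≥ 0 := by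
  classical
  -- ediam is finite
  have hne : G.ediam ≠ ⊤ := by
    have hb : ∀ u v : V, G.edist u v ≤ (Fintype.card V : ℕ∞) := by
      intro u v
      obtain ⟨w⟩ := hG.preconnected u v
      have hp := w.toPath.2.length_lt
      calc G.edist u v ≤ (w.toPath : G.Walk u v).length := G.edist_le _
        _ ≤ (Fintype.card V : ℕ∞) := by exact_mod_cast hp.le
    exact ne_top_of_le_ne_top (by simp) (G.ediam_le_of_edist_le hb)
  have hdle : ∀ p : V, G.dist p s ≤ G.diam := fun p => G.dist_le_diam hne
  -- monotonicity from 0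
  have hmono : ∀ j (p : V), τ j p ≥ τ 0 p := by
    intro j p
    induction j with
    | zero => exact le_refl _
    | succ k ih => exact le_trans ih (h2 k p)
  -- key induction
  have key : ∀ j (p : V), τ j p ≥ 0 ∨ τ j p ≥ (j : ℤ) - G.diam - G.dist p s := by
    intro j
    induction j with
    | zero =>
      intro p
      right
      have := h1 p
      push_cast
      omega
    | succ k ih =>
      intro p
      by_cases hq : ∃ q : V, G.Adj p q ∧ τ k q > τ k p
      · have h5 := h4 k p hq
        rcases ih p with h | h
        · left; omega
        · right; push_cast at h ⊢; omega
      · push_neg at hq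
        by_cases hps : p = s
        · left
          subst hps
          have := hmono (k+1) p
          omega
        · -- pick a neighbor closer to s
          have hd : 0 < G.dist p s := hG.pos_dist_of_ne hps
          obtain ⟨w, hw⟩ := hG.exists_walk_length_eq_dist p s
          have hwl : w.length = G.dist p s := hw
          cases w with
          | nil => exact absurd rfl hps
          | cons hadj w' =>
            rename_i q
            have hq' : G.dist q s ≤ w'.length := G.dist_le _
            have hlen : w'.length + 1 = G.dist p s := by
              simpa [SimpleGraph.Walk.length_cons] using hwl
            have hτ : τ k q ≤ τ k p := hq q hadj
            have h6 := h2 k p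
            rcases ih q with h | h
            · left; omega
            · right
              have : (G.dist q s : ℤ) ≤ (G.dist p s : ℤ) - 1 := by
                push_cast
                omega
              push_cast at h ⊢
              omega
  intro p
  rcases key (2 * G.diam) p with h | h
  · exact h
  · have := hdle p
    push_cast at h
    omega
end

section
/- Let G be a finite connected graph with diameter D, let T ≥ 1, and let s₁, s₂, …, s_T be nodes with s_{i−1} ∈ N[s_i] (closed neighborhood) for all 1 < i ≤ T; set s_i = s₁ for i < 1. Let τ : ℕ × V → ℤ satisfy: (1) τ(0, p) ≥ 0 for all p; (2) τ(j+1, p) ≥ τ(j, p); (3) |τ(j, p) − τ(j, q)| ≤ 1 for every edge {p,q} and every j; (4) for every j, every 1 ≤ i ≤ T and every node p with τ(j, p) = i − 1: if p = s_i, or if some neighbor q of p has τ(j, q) ≥ i, then τ(j+1, p) ≥ i. Then for all p and all 0 ≤ i ≤ T with 3i − 2 + d(p, s_i) ≤ j, we have τ(j, p) ≥ i. In particular τ(3T + D − 2, p) ≥ T for every node p. -/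
theorem stmt14 {V : Type*} [Fintype V] (G : SimpleGraph V) (hG : G.Connected)
    (T : ℕ) (hT : 1 ≤ T) (s : ℕ → V)
    (hs0 : ∀ i < 1, s i = s 1)
    (hseq : ∀ i, 1 < i → i ≤ T → s (i - 1) = s i ∨ G.Adj (s (i - 1)) (s i))
    (τ : ℕ → V → ℤ)
    (h1 : ∀ p : V, τ 0 p ≥ 0)
    (h2 : ∀ (j : ℕ) (p : V), τ (j + 1) p ≥ τ j p)
    (h3 : ∀ (j : ℕ) (p q : V), G.Adj p q → |τ j p - τ j q| ≤ 1)
    (h4 : ∀ (j i : ℕ) (p : V), 1 ≤ i → i ≤ T → τ j p = (i : ℤ) - 1 →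
      (p = s i ∨ ∃ q : V, G.Adj p q ∧ τ j q ≥ (i : ℤ)) → τ (j + 1) p ≥ (i : ℤ)) :
    (∀ (p : V) (i j : ℕ), i ≤ T →
        3 * (i : ℤ) - 2 + (G.dist p (s i) : ℤ) ≤ (j : ℤ) → τ j p ≥ (i : ℤ)) ∧
    (∀ p : V, τ (3 * T + G.diam - 2) p ≥ (T : ℤ)) := by
  have hpos : ∀ (j : ℕ) (p : V), τ j p ≥ 0 := by
    intro j
    induction j with
    | zero => exact h1
    | succ j ih => intro p; exact le_trans (ih p) (h2 j p)
  have key : ∀ (j : ℕ) (p : V) (i : ℕ), i ≤ T →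
      3 * (i : ℤ) - 2 + (G.dist p (s i) : ℤ) ≤ (j : ℤ) → τ j p ≥ (i : ℤ) := by
    intro j
    induction j with
    | zero =>
      intro p i hi hle
      rcases Nat.eq_zero_or_pos i with h0 | h1i
      · subst h0; exact hpos 0 p
      · exfalso
        have : (0:ℤ) ≤ (G.dist p (s i) : ℤ) := Int.natCast_nonneg _
        omega
    | succ j ih =>
      intro p i hi hle
      rcases Nat.eq_zero_or_pos i with h0 | h1i
      · subst h0; exact hpos _ p
      · -- distance step for consecutive starters
        have hstep : (G.dist p (s (i - 1)) : ℤ) ≤ (G.dist p (s i) : ℤ) + 1 := by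
          rcases Nat.lt_or_ge i 2 with h2i | h2i
          · have : i = 1 := by omega
            subst this
            rw [hs0 0 (by norm_num)]
            omega
          · rcases hseq i (by omega) hi with heq | hadj
            · rw [heq]; omega
            · have htri := hG.dist_triangle (u := p) (v := s i) (w := s (i - 1))
              have : G.dist (s i) (s (i - 1)) ≤ 1 := by
                have := G.dist_le hadj.symm.toWalk
                simpa using this
              push_cast
              omega
        have hcast : ((i - 1 : ℕ) : ℤ) = (i : ℤ) - 1 := by omega
        have hprev : τ j p ≥ (i : ℤ) - 1 := by
          have := ih p (i - 1) (by omega) (by rw [hcast]; omega)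
          omega
        by_cases hcase : τ j p ≥ (i : ℤ)
        · exact le_trans hcase (h2 j p)
        · have heq : τ j p = (i : ℤ) - 1 := by omega
          apply h4 j i p h1i hi heq
          by_cases hd : G.dist p (s i) = 0
          · left
            exact (hG.dist_eq_zero_iff).mp hd
          · right
            obtain ⟨w, hw⟩ := hG.exists_walk_length_eq_dist p (s i)
            cases w with
            | nil => simp at hw; simp at hd
            | cons hadj w' =>
              rename_i q
              refine ⟨q, hadj, ?_⟩
              have hq : G.dist q (s i) ≤ w'.length := G.dist_le w'
              have hw' : w'.length + 1 = G.dist p (s i) := by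
                simpa [SimpleGraph.Walk.length_cons] using hw
              apply ih q i hi
              have : (G.dist q (s i) : ℤ) ≤ (G.dist p (s i) : ℤ) - 1 := by
                push_cast
                omega
              omega
  refine ⟨fun p i j hi hle => key j p i hi hle, fun p => ?_⟩
  have hne : Nonempty V := hG.nonempty
  obtain ⟨u, v, huv⟩ := G.exists_edist_eq_ediam_of_finite
  have hned : G.ediam ≠ ⊤ := by
    rw [← huv]
    exact SimpleGraph.edist_ne_top_iff_reachable.mpr (hG u v)
  have hdd : G.dist p (s T) ≤ G.diam := G.dist_le_diam hned
  apply key (3 * T + G.diam - 2) p T le_rfl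
  have : (3 * T + G.diam - 2 : ℕ) = 3 * T + G.diam - 2 := rfl
  have hcast : ((3 * T + G.diam - 2 : ℕ) : ℤ) = 3 * (T : ℤ) + (G.diam : ℤ) - 2 := by omega
  rw [hcast]
  have : (G.dist p (s T) : ℤ) ≤ (G.diam : ℤ) := by exact_mod_cast hdd
  omega
end
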